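/- Let ℕ* = ℕ ∪ {∞}, Inc the space of nondecreasing maps ℕ → ℕ* strictly increasing where finite, Q ⊆ Inc its set of eventually-∞ points, and k ≥ 1. Suppose Q^k ⊆ X^k ⊆ Inc^k and Ψ : X^k → ℕ^ℕ is continuous at every point of Q^k. Then there exists g ∈ ℕ^ℕ such that for every n ∈ ℕ and all x_1, …, x_k ∈ X: if g(n) < min{x_1(n), …, x_k(n)}, then Ψ(x_1, …, x_k)(n) ≤ g(n). -/

import Mathlib

open Filter OnePoint Set Topology

def opLE (a b : OnePoint ℕ) : Prop :=
  ∀ m : ℕ, b = (m : OnePoint ℕ) → ∃ m' : ℕ, a = (m' : OnePoint ℕ) ∧ m' ≤ m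

def opLT (a b : OnePoint ℕ) : Prop :=
  ∀ m : ℕ, b = (m : OnePoint ℕ) → ∃ m' : ℕ, a = (m' : OnePoint ℕ) ∧ m' < m

/-- The set of nondecreasing functions `ℕ → ℕ ∪ {∞}` which are strictly
increasing where finite. -/
def Inc : Set (ℕ → OnePoint ℕ) :=
  {f | (∀ n, opLE (f n) (f (n + 1))) ∧
       ∀ n, (∃ m : ℕ, f n = (m : OnePoint ℕ)) → opLT (f n) (f (n + 1))}

lemma inc_mono {f : ℕ → OnePoint ℕ} (hf : f ∈ Inc) :
    ∀ {n m : ℕ}, n ≤ m → ∀ c : ℕ, f m = (c : OnePoint ℕ) →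
      ∃ c' : ℕ, f n = (c' : OnePoint ℕ) ∧ c' ≤ c := by
  intro n m h
  induction m with
  | zero =>
    intro c hc
    exact ⟨c, by simpa [Nat.le_zero.mp h] using hc, le_rfl⟩
  | succ m ih =>
    intro c hc
    rcases Nat.lt_or_ge n (m + 1) with h' | h'
    · obtain ⟨c', hc', hle⟩ := hf.1 m c hc
      obtain ⟨c'', h1, h2⟩ := ih (Nat.lt_succ_iff.mp h') c' hc'
      exact ⟨c'', h1, h2.trans hle⟩
    · have : n = m + 1 := le_antisymm h h'
      exact ⟨c, this ▸ hc, le_rfl⟩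

lemma isOpen_coe_singleton (m : ℕ) : IsOpen ({(m : OnePoint ℕ)} : Set (OnePoint ℕ)) := by
  rw [← Set.image_singleton]
  exact isOpen_image_coe.mpr (isOpen_discrete _)

lemma isOpen_eval_eq (j m : ℕ) : IsOpen {f : ℕ → OnePoint ℕ | f j = (m : OnePoint ℕ)} := by
  have : {f : ℕ → OnePoint ℕ | f j = (m : OnePoint ℕ)}
      = (fun f : ℕ → OnePoint ℕ => f j) ⁻¹' {(m : OnePoint ℕ)} := rfl
  rw [this]
  exact (isOpen_coe_singleton m).preimage (continuous_apply j)

lemma isClosed_Inc : IsClosed Inc := by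
  have hset : Inc =
      (⋂ n, ⋂ m : ℕ, {f : ℕ → OnePoint ℕ | f (n + 1) = (m : OnePoint ℕ)}ᶜ ∪
        {f : ℕ → OnePoint ℕ | f n ∈ ((↑) '' Set.Iic m : Set (OnePoint ℕ))}) ∩
      (⋂ n, ⋂ m₁ : ℕ, ⋂ m : ℕ, {f : ℕ → OnePoint ℕ | f n = (m₁ : OnePoint ℕ)}ᶜ ∪
        ({f : ℕ → OnePoint ℕ | f (n + 1) = (m : OnePoint ℕ)}ᶜ ∪
          {_f : ℕ → OnePoint ℕ | m₁ < m})) := by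
    ext f
    simp only [Inc, Set.mem_setOf_eq, Set.mem_inter_iff, Set.mem_iInter, Set.mem_union,
      Set.mem_compl_iff, Set.mem_image, Set.mem_Iic]
    constructor
    · rintro ⟨h1, h2⟩
      constructor
      · intro n m
        by_cases hm : f (n + 1) = (m : OnePoint ℕ)
        · obtain ⟨m', hm', hle⟩ := h1 n m hm
          exact Or.inr ⟨m', hle, hm'.symm⟩
        · exact Or.inl hm
      · intro n m₁ m
        by_cases hm₁ : f n = (m₁ : OnePoint ℕ)
        · by_cases hm : f (n + 1) = (m : OnePoint ℕ)
          · obtain ⟨m', hm', hlt⟩ := h2 n ⟨m₁, hm₁⟩ m hm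
            have : m' = m₁ := coe_eq_coe.mp (hm' ▸ hm₁ ▸ rfl)
            exact Or.inr (Or.inr (this ▸ hlt))
          · exact Or.inr (Or.inl hm)
        · exact Or.inl hm₁
    · rintro ⟨h1, h2⟩
      constructor
      · intro n m hm
        rcases h1 n m with h | ⟨m', hle, hm'⟩
        · exact absurd hm h
        · exact ⟨m', hm'.symm, hle⟩
      · rintro n ⟨m₁, hm₁⟩ m hm
        rcases h2 n m₁ m with h | h | h
        · exact absurd hm₁ h
        · exact absurd hm h
        · exact ⟨m₁, hm₁, h⟩
  rw [hset]
  apply IsClosed.inter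
  · refine isClosed_iInter fun n => isClosed_iInter fun m => IsClosed.union ?_ ?_
    · exact (isOpen_eval_eq (n + 1) m).isClosed_compl
    · have : {f : ℕ → OnePoint ℕ | f n ∈ ((↑) '' Set.Iic m : Set (OnePoint ℕ))}
          = (fun f : ℕ → OnePoint ℕ => f n) ⁻¹' ((↑) '' Set.Iic m) := rfl
      rw [this]
      exact IsClosed.preimage (continuous_apply n)
        (isClosed_image_coe.mpr ⟨isClosed_discrete _, (Set.finite_Iic m).isCompact⟩)
  · refine isClosed_iInter fun n => isClosed_iInter fun m₁ => isClosed_iInter fun m =>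
      IsClosed.union ?_ (IsClosed.union ?_ ?_)
    · exact (isOpen_eval_eq n m₁).isClosed_compl
    · exact (isOpen_eval_eq (n + 1) m).isClosed_compl
    · by_cases h : m₁ < m
      · simp only [h]; simpa using isClosed_univ
      · simp only [h]; simpa using isClosed_empty
/-- The set of eventually-∞ elements of `Inc`. -/
def Qinf : Set (ℕ → OnePoint ℕ) :=
  {f ∈ Inc | ∀ᶠ n in atTop, f n = (∞ : OnePoint ℕ)}

theorem stmt13 (k : ℕ) (hk : 1 ≤ k) (X : Set (ℕ → OnePoint ℕ))
    (hQX : Qinf ⊆ X) (hXInc : X ⊆ Inc)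
    (Ψ : (Fin k → ℕ → OnePoint ℕ) → ℕ → ℕ)
    (hcont : ∀ q : Fin k → ℕ → OnePoint ℕ, (∀ i, q i ∈ Qinf) →
      ContinuousWithinAt Ψ {x | ∀ i, x i ∈ X} q) :
    ∃ g : ℕ → ℕ, ∀ n : ℕ, ∀ x : Fin k → ℕ → OnePoint ℕ, (∀ i, x i ∈ X) →
      (∀ i, ∀ m : ℕ, x i n = (m : OnePoint ℕ) → g n < m) →
      Ψ x n ≤ g n := by
  classical
  set S : Set (Fin k → ℕ → OnePoint ℕ) := {x | ∀ i, x i ∈ X} with hSdef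
  have hK : IsCompact {y : Fin k → ℕ → OnePoint ℕ | ∀ i, y i ∈ Inc} := by
    have heq : {y : Fin k → ℕ → OnePoint ℕ | ∀ i, y i ∈ Inc}
        = Set.pi Set.univ (fun _ : Fin k => Inc) := by
      ext y; simp [Set.mem_pi]
    rw [heq]
    exact isCompact_univ_pi fun _ => isClosed_Inc.isCompact
  have key : ∀ n : ℕ, ∃ G : ℕ, ∀ x : Fin k → ℕ → OnePoint ℕ, (∀ i, x i ∈ X) →
      (∀ i, ∀ m : ℕ, x i n = (m : OnePoint ℕ) → G < m) → Ψ x n ≤ G := by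
    intro n
    by_contra hcon
    push_neg at hcon
    choose x hxX hxBig hxPsi using hcon
    have hxK : Filter.map x atTop ≤ 𝓟 {y : Fin k → ℕ → OnePoint ℕ | ∀ i, y i ∈ Inc} := by
      rw [le_principal_iff, Filter.mem_map]
      exact Filter.Eventually.of_forall fun G i => hXInc (hxX G i)
    obtain ⟨z, hzK, hz⟩ := hK.exists_mapClusterPt hxK
    have hfreq : ∀ s ∈ 𝓝 z, ∃ᶠ G in atTop, x G ∈ s := mapClusterPt_iff_frequently.mp hz
    -- z is ∞ at coordinate n
    have zn : ∀ i, z i n = (∞ : OnePoint ℕ) := by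
      intro i
      by_contra h
      obtain ⟨c, hc⟩ : ∃ c : ℕ, z i n = (c : OnePoint ℕ) := by
        cases hzin : z i n with
        | infty => exact absurd hzin h
        | coe c => exact ⟨c, rfl⟩
      have hUopen : IsOpen {y : Fin k → ℕ → OnePoint ℕ | y i n = (c : OnePoint ℕ)} := by
        have : {y : Fin k → ℕ → OnePoint ℕ | y i n = (c : OnePoint ℕ)}
            = (fun y : Fin k → ℕ → OnePoint ℕ => y i) ⁻¹' {f : ℕ → OnePoint ℕ | f n = (c : OnePoint ℕ)} := rfl
        rw [this]
        exact (isOpen_eval_eq n c).preimage (continuous_apply i)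
      have hfr := hfreq _ (hUopen.mem_nhds hc)
      obtain ⟨G, hGU, hGc⟩ := (hfr.and_eventually (eventually_ge_atTop c)).exists
      have := hxBig G i c hGU
      omega
    -- z is ∞ at all coordinates ≥ n
    have zmono : ∀ i, ∀ m, n ≤ m → z i m = (∞ : OnePoint ℕ) := by
      intro i m hm
      by_contra h
      obtain ⟨c, hc⟩ : ∃ c : ℕ, z i m = (c : OnePoint ℕ) := by
        cases hzim : z i m with
        | infty => exact absurd hzim h
        | coe c => exact ⟨c, rfl⟩
      obtain ⟨c', hc', _⟩ := inc_mono (hzK i) hm c hc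
      exact (coe_ne_infty c') (hc' ▸ zn i)
    have hzQ : ∀ i, z i ∈ Qinf :=
      fun i => ⟨hzK i, eventually_atTop.mpr ⟨n, fun m hm => zmono i m hm⟩⟩
    have hzS : z ∈ S := fun i => hQX (hzQ i)
    have hcz := hcont z hzQ
    have hW : {h : ℕ → ℕ | h n = Ψ z n} ∈ 𝓝 (Ψ z) := by
      have hop : IsOpen {h : ℕ → ℕ | h n = Ψ z n} := by
        have : {h : ℕ → ℕ | h n = Ψ z n}
            = (fun h : ℕ → ℕ => h n) ⁻¹' {Ψ z n} := rfl
        rw [this]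
        exact (isOpen_discrete _).preimage (continuous_apply n)
      exact hop.mem_nhds rfl
    have hpre : Ψ ⁻¹' {h : ℕ → ℕ | h n = Ψ z n} ∈ 𝓝[S] z := hcz hW
    rw [mem_nhdsWithin] at hpre
    obtain ⟨V, hVopen, hzV, hVsub⟩ := hpre
    have hfr := hfreq V (hVopen.mem_nhds hzV)
    obtain ⟨G, hGV, hGge⟩ := (hfr.and_eventually (eventually_ge_atTop (Ψ z n + 1))).exists
    have heq : Ψ (x G) n = Ψ z n := hVsub ⟨hGV, fun i => hxX G i⟩
    have := hxPsi G
    omega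
  choose g hg using key
  exact ⟨g, fun n => hg n⟩
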